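/- Let n ≥ 2 and let H be an n×n real symmetric matrix with eigenvalues λ₁ ≤ ⋯ ≤ λₙ. Suppose there is perfect state transfer from vertex 1 to vertex 2 at time t₀, i.e. |(exp(i t₀ H))₁₂| = 1. Then for every real h with |h|·(λₙ − λ₁) < π, the fidelity at the perturbed time satisfies p(t₀ + h) ≥ 1 − h² · ((H²)₁₁ − (H₁₁)²), where (H²)₁₁ and H₁₁ denote the (1,1) entries of H² and H respectively. -/

import Mathlib

open Matrix

/-- The time evolution `exp(i t H)` of a real symmetric Hamiltonian `H`,
regarded as a complex matrix. -/
noncomputable def timeEvo {n : ℕ} (H : Matrix (Fin n) (Fin n) ℝ) (t : ℝ) :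
    Matrix (Fin n) (Fin n) ℂ :=
  NormedSpace.exp (Complex.I • (t : ℂ) • H.map (fun x => (x : ℂ)))

lemma quad_bound (A c X : ℝ) (h1 : c ≤ A) (h2 : 1 - X / 2 ≤ c) (h3 : 0 ≤ A) :
    1 - X ≤ A ^ 2 := by
  rcases le_or_gt X 2 with hc | hc
  · have hA : 1 - X / 2 ≤ A := le_trans h2 h1
    have h0 : (0:ℝ) ≤ 1 - X / 2 := by linarith
    nlinarith [mul_self_le_mul_self h0 hA, sq_nonneg X]
  · nlinarith

lemma entry_formula {n : ℕ} {α : Type*} [CommRing α] (R : Matrix (Fin n) (Fin n) α)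
    (d : Fin n → α) (a b : Fin n) :
    (Rᵀ * Matrix.diagonal d * R) a b = ∑ j, R j a * d j * R j b := by
  rw [Matrix.mul_assoc]
  simp [Matrix.mul_apply, Matrix.diagonal_apply, Matrix.transpose_apply, ite_mul,
    zero_mul, mul_assoc]

/-- Corollary (`s`-free timing-error bound): if there is perfect state transfer from
vertex 1 to vertex 2 at time `t₀` and `|h| (λₙ - λ₁) < π`, then
`p(t₀+h) ≥ 1 - h² ((H²)₁₁ - (H₁₁)²)`. -/
theorem stmt2 {n : ℕ} (hn : 2 ≤ n) (H : Matrix (Fin n) (Fin n) ℝ) (hH : H.IsSymm)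
    (μ : Fin n → ℝ) (hmono : Monotone μ)
    (Q : Matrix (Fin n) (Fin n) ℝ) (hQ : Qᵀ * Q = 1)
    (hHQ : H = Qᵀ * Matrix.diagonal μ * Q)
    (t₀ : ℝ)
    (hPST : ‖timeEvo H t₀ ⟨0, by omega⟩ ⟨1, by omega⟩‖ = 1)
    (h : ℝ) (hh : |h| * (μ ⟨n - 1, by omega⟩ - μ ⟨0, by omega⟩) < Real.pi) :
    1 - h ^ 2 * ((H * H) ⟨0, by omega⟩ ⟨0, by omega⟩ - (H ⟨0, by omega⟩ ⟨0, by omega⟩) ^ 2)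
      ≤ ‖timeEvo H (t₀ + h) ⟨0, by omega⟩ ⟨1, by omega⟩‖ ^ 2 := by
  have hn0 : 0 < n := by omega
  have hn1 : 1 < n := by omega
  set i0 : Fin n := ⟨0, by omega⟩ with hi0
  set i1 : Fin n := ⟨1, by omega⟩ with hi1
  -- complex version of Q
  set R : Matrix (Fin n) (Fin n) ℂ := Q.map (fun x => (x : ℂ)) with hRdef
  have hmapT : Qᵀ.map (fun x : ℝ => (x : ℂ)) = Rᵀ := by
    ext i j; simp [hRdef]
  have hR1 : Rᵀ * R = 1 := by
    have := congrArg (fun M : Matrix (Fin n) (Fin n) ℝ => M.map Complex.ofRealHom) hQ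
    exact (by simpa [Matrix.map_mul, Matrix.map_one, hmapT] using this :
      Qᵀ.map Complex.ofRealHom * Q.map Complex.ofRealHom = 1)
  have hR1' : R * Rᵀ = 1 := mul_eq_one_comm.mp hR1
  have hRinv : R⁻¹ = Rᵀ := Matrix.inv_eq_left_inv hR1
  have hRunit : IsUnit R :=
    (Matrix.isUnit_iff_isUnit_det _).mpr (Matrix.isUnit_det_of_left_inverse hR1)
  set D : ℝ → Matrix (Fin n) (Fin n) ℂ :=
    fun t => Matrix.diagonal (fun j => Complex.exp (Complex.I * t * μ j)) with hDdef
  -- spectral form of timeEvo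
  have key : ∀ t : ℝ, timeEvo H t = Rᵀ * D t * R := by
    intro t
    have hmap : H.map (fun x => (x : ℂ)) =
        Rᵀ * Matrix.diagonal (fun j => (μ j : ℂ)) * R := by
      rw [hHQ]
      calc (Qᵀ * Matrix.diagonal μ * Q).map (fun x => (x : ℂ))
          = (Qᵀ * Matrix.diagonal μ * Q).map Complex.ofRealHom := rfl
        _ = Qᵀ.map Complex.ofRealHom * (Matrix.diagonal μ).map Complex.ofRealHom
              * Q.map Complex.ofRealHom := by
            rw [Matrix.map_mul, Matrix.map_mul]
        _ = Rᵀ * Matrix.diagonal (fun j => (μ j : ℂ)) * R := by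
            rw [Matrix.diagonal_map (map_zero _)]
            rfl
    have hsmul : Complex.I • (t : ℂ) • (H.map (fun x => (x : ℂ)))
        = Rᵀ * Matrix.diagonal (fun j => Complex.I * t * μ j) * R := by
      rw [hmap]
      ext a b
      rw [Matrix.smul_apply, Matrix.smul_apply, entry_formula, entry_formula,
        smul_eq_mul, smul_eq_mul, Finset.mul_sum, Finset.mul_sum]
      refine Finset.sum_congr rfl fun j _ => ?_
      ring
    rw [timeEvo, hsmul, ← hRinv, Matrix.exp_conj' R _ hRunit, hRinv,
      Matrix.exp_diagonal, Pi.exp_def, ← Complex.exp_eq_exp_ℂ]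
  -- group law
  have group : timeEvo H (t₀ + h) = timeEvo H h * timeEvo H t₀ := by
    rw [key, key, key]
    have hD : D (t₀ + h) = D h * D t₀ := by
      show Matrix.diagonal _ = Matrix.diagonal _ * Matrix.diagonal _
      rw [Matrix.diagonal_mul_diagonal]
      refine congrArg Matrix.diagonal (funext fun j => ?_)
      show Complex.exp _ = Complex.exp _ * Complex.exp _
      rw [← Complex.exp_add]
      congr 1
      push_cast
      ring
    rw [hD]
    calc Rᵀ * (D h * D t₀) * R = Rᵀ * D h * (R * Rᵀ) * D t₀ * R := by
          rw [hR1']; noncomm_ring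
      _ = Rᵀ * D h * R * (Rᵀ * D t₀ * R) := by noncomm_ring
  -- unitarity of U(t₀) : column sums
  have hRH : Rᴴ = Rᵀ := by
    ext i j
    simp [hRdef, Matrix.conjTranspose_apply]
  have hRTH : (Rᵀ)ᴴ = R := by
    ext i j
    simp [hRdef, Matrix.conjTranspose_apply]
  have hUU : (timeEvo H t₀)ᴴ * timeEvo H t₀ = 1 := by
    rw [key]
    rw [Matrix.conjTranspose_mul, Matrix.conjTranspose_mul, hRH, hRTH]
    have hDH : (D t₀)ᴴ * D t₀ = 1 := by
      rw [hDdef]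
      simp only [Matrix.diagonal_conjTranspose]
      rw [Matrix.diagonal_mul_diagonal]
      convert Matrix.diagonal_one using 2
      ext j
      simp only [Pi.star_apply, RCLike.star_def, ← Complex.exp_conj, ← Complex.exp_add]
      rw [show (starRingEnd ℂ) (Complex.I * t₀ * μ j) + Complex.I * t₀ * μ j = 0 by
        simp [Complex.ext_iff]]
      exact Complex.exp_zero
    calc Rᵀ * ((D t₀)ᴴ * R) * (Rᵀ * D t₀ * R)
        = Rᵀ * ((D t₀)ᴴ * (R * Rᵀ) * D t₀) * R := by noncomm_ring
      _ = Rᵀ * ((D t₀)ᴴ * D t₀) * R := by rw [hR1', Matrix.mul_one]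
      _ = 1 := by rw [hDH, Matrix.mul_one, hR1]
  have hsumSq : ∑ k, Complex.normSq (timeEvo H t₀ k i1) = 1 := by
    have := congrArg (fun M : Matrix (Fin n) (Fin n) ℂ => M i1 i1) hUU
    simp only [Matrix.mul_apply, Matrix.one_apply_eq, Matrix.conjTranspose_apply] at this
    have h2 : ((∑ k, Complex.normSq (timeEvo H t₀ k i1) : ℝ) : ℂ) = 1 := by
      push_cast
      rw [← this]
      refine Finset.sum_congr rfl fun k _ => ?_
      rw [Complex.normSq_eq_conj_mul_self]
      rfl
    exact_mod_cast h2
  -- PST collapse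
  have h01 : Complex.normSq (timeEvo H t₀ i0 i1) = 1 := by
    have habs : ‖timeEvo H t₀ i0 i1‖ ^ 2 = 1 := by rw [hPST]; norm_num
    rwa [Complex.sq_norm] at habs
  have vanish : ∀ k : Fin n, k ≠ i0 → timeEvo H t₀ k i1 = 0 := by
    intro k hk
    have hrest : ∑ j ∈ Finset.univ.erase i0, Complex.normSq (timeEvo H t₀ j i1) = 0 := by
      have hsplit : Complex.normSq (timeEvo H t₀ i0 i1)
          + ∑ j ∈ Finset.univ.erase i0, Complex.normSq (timeEvo H t₀ j i1)
          = ∑ j, Complex.normSq (timeEvo H t₀ j i1) :=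
        Finset.add_sum_erase Finset.univ
          (fun j => Complex.normSq (timeEvo H t₀ j i1)) (Finset.mem_univ i0)
      rw [hsumSq, h01] at hsplit
      linarith
    have := (Finset.sum_eq_zero_iff_of_nonneg
      (fun j _ => Complex.normSq_nonneg _)).mp hrest k
      (Finset.mem_erase.mpr ⟨hk, Finset.mem_univ k⟩)
    exact Complex.normSq_eq_zero.mp this
  -- reduce to |U(h)₀₀|
  set z : ℂ := timeEvo H h i0 i0 with hz
  have hent : timeEvo H (t₀ + h) i0 i1 = z * timeEvo H t₀ i0 i1 := by
    rw [group, Matrix.mul_apply]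
    exact Finset.sum_eq_single i0
      (fun k _ hk => by rw [vanish k hk, mul_zero])
      (fun hmem => absurd (Finset.mem_univ i0) hmem)
  have habs_eq : ‖timeEvo H (t₀ + h) i0 i1‖ = ‖z‖ := by
    rw [hent, norm_mul, hPST, mul_one]
  -- weights and moments
  set w : Fin n → ℝ := fun j => Q j i0 ^ 2 with hw
  set m : ℝ := ∑ j, w j * μ j with hm
  set s : ℝ := ∑ j, w j * μ j ^ 2 with hs
  have hw_nonneg : ∀ j, 0 ≤ w j := fun j => sq_nonneg _
  have hsum1 : ∑ j, w j = 1 := by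
    have := congrArg (fun M : Matrix (Fin n) (Fin n) ℝ => M i0 i0) hQ
    simp only [Matrix.mul_apply, Matrix.one_apply_eq, Matrix.transpose_apply] at this
    rw [← this]
    exact Finset.sum_congr rfl fun j _ => by rw [hw]; ring
  have hHm : H i0 i0 = m := by
    rw [hHQ, entry_formula, hm]
    exact Finset.sum_congr rfl fun j _ => by
      simp only [hw]; ring
  have hHs : (H * H) i0 i0 = s := by
    have hHH : H * H = Qᵀ * Matrix.diagonal (fun j => μ j * μ j) * Q := by
      have hQ1 : Q * Qᵀ = 1 := mul_eq_one_comm.mp hQ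
      rw [hHQ]
      calc Qᵀ * Matrix.diagonal μ * Q * (Qᵀ * Matrix.diagonal μ * Q)
          = Qᵀ * Matrix.diagonal μ * (Q * Qᵀ) * Matrix.diagonal μ * Q := by noncomm_ring
        _ = Qᵀ * (Matrix.diagonal μ * Matrix.diagonal μ) * Q := by
            rw [hQ1]; noncomm_ring
        _ = Qᵀ * Matrix.diagonal (fun j => μ j * μ j) * Q := by
            rw [Matrix.diagonal_mul_diagonal]
    rw [hHH, entry_formula, hs]
    exact Finset.sum_congr rfl fun j _ => by
      simp only [hw]; ring
  -- the rotated amplitude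
  have hzform : z = ∑ j, (Q j i0 : ℂ) * Complex.exp (Complex.I * h * μ j) * (Q j i0 : ℂ) := by
    rw [hz, key, entry_formula]
    rfl
  have hrot : Complex.exp ((-(h * m) : ℝ) * Complex.I) * z
      = ∑ j, (w j : ℂ) * Complex.exp ((h * (μ j - m) : ℝ) * Complex.I) := by
    rw [hzform, Finset.mul_sum]
    refine Finset.sum_congr rfl fun j _ => ?_
    have h1 : (Q j i0 : ℂ) * Complex.exp (Complex.I * h * μ j) * (Q j i0 : ℂ)
        = (w j : ℂ) * Complex.exp (Complex.I * h * μ j) := by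
      rw [hw]; push_cast; ring
    rw [h1, ← mul_assoc, mul_comm (Complex.exp _) ((w j : ℂ)), mul_assoc,
      ← Complex.exp_add]
    congr 1
    push_cast
    ring
  set c : ℝ := ∑ j, w j * Real.cos (h * (μ j - m)) with hc
  have hre : (Complex.exp ((-(h * m) : ℝ) * Complex.I) * z).re = c := by
    rw [hrot, Complex.re_sum, hc]
    refine Finset.sum_congr rfl fun j _ => ?_
    rw [Complex.re_ofReal_mul, Complex.exp_ofReal_mul_I_re]
  have hc_le : c ≤ ‖z‖ := by
    calc c = (Complex.exp ((-(h * m) : ℝ) * Complex.I) * z).re := hre.symm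
      _ ≤ ‖Complex.exp ((-(h * m) : ℝ) * Complex.I) * z‖ := Complex.re_le_norm _
      _ = ‖z‖ := by rw [norm_mul, Complex.norm_exp_ofReal_mul_I, one_mul]
  have hlow : 1 - h ^ 2 * (s - m ^ 2) / 2 ≤ c := by
    have hstep : ∑ j, w j * (1 - (h * (μ j - m)) ^ 2 / 2) ≤ c := by
      rw [hc]
      exact Finset.sum_le_sum fun j _ =>
        mul_le_mul_of_nonneg_left (Real.one_sub_sq_div_two_le_cos) (hw_nonneg j)
    have hval : ∑ j, w j * (1 - (h * (μ j - m)) ^ 2 / 2)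
        = 1 - h ^ 2 * (s - m ^ 2) / 2 := by
      have expand : ∀ j ∈ Finset.univ, w j * (1 - (h * (μ j - m)) ^ 2 / 2)
          = w j - (h ^ 2 / 2) * (w j * μ j ^ 2) + (h ^ 2 * m) * (w j * μ j)
            - (h ^ 2 * m ^ 2 / 2) * w j := fun j _ => by ring
      rw [Finset.sum_congr rfl expand]
      rw [Finset.sum_sub_distrib, Finset.sum_add_distrib, Finset.sum_sub_distrib,
        ← Finset.mul_sum, ← Finset.mul_sum, ← Finset.mul_sum, hsum1, ← hs, ← hm]
      ring
    linarith [hval ▸ hstep]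
  -- conclude
  rw [habs_eq, hHm, hHs]
  have habs0 : (0 : ℝ) ≤ ‖z‖ := norm_nonneg z
  exact quad_bound ‖z‖ c (h ^ 2 * (s - m ^ 2)) hc_le hlow habs0
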